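/- arXiv:2312.14521 — 2 statements merged into one kernel-verified Lean document; each statement's English description precedes it below -/
import Mathlib

section
/- For the depolarizing channel E(ρ) = pI/D + (1-p)ρ on a D-dimensional space with p ∈ (0,1), and any measurement operator 0 ≤ M ≤ I and density matrices ρ, σ with trace distance at most d, we have Tr(M·E(ρ)) ≤ (1 + ((1-p)/p)·d·D) · Tr(M·E(σ)). -/
open Matrix ComplexOrder

/-- real part of diagonal entries of a PSD matrix is nonneg -/
lemma aux_diag_re_nonneg {n : ℕ} {A : Matrix (Fin n) (Fin n) ℂ} (hA : A.PosSemidef)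
    (i : Fin n) : 0 ≤ (A i i).re := by
  have h := hA.dotProduct_mulVec_nonneg (Pi.single i 1)
  rw [Complex.le_def] at h
  have : star (Pi.single i 1 : Fin n → ℂ) ⬝ᵥ (A *ᵥ Pi.single i 1) = A i i := by
    simp [dotProduct, mulVec, Pi.single_apply]
  rw [this] at h
  simpa using h.1

open scoped MatrixOrder in
/-- trace of product of PSD matrices has nonneg real part -/
lemma aux_trace_mul_re_nonneg {n : ℕ} {A B : Matrix (Fin n) (Fin n) ℂ}
    (hA : A.PosSemidef) (hB : B.PosSemidef) : 0 ≤ (A * B).trace.re := by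
  set S := CFC.sqrt A with hS
  have hSh : S.IsHermitian := (Matrix.nonneg_iff_posSemidef.mp (CFC.sqrt_nonneg A)).isHermitian
  have h1 : A * B = S * (S * B) := by
    rw [← mul_assoc, CFC.sqrt_mul_sqrt_self A hA.nonneg]
  have h2 : (A * B).trace = (S * B * S).trace := by
    rw [h1, Matrix.trace_mul_comm, mul_assoc]
  have hPSD : (S * B * Sᴴ).PosSemidef := hB.mul_mul_conjTranspose_same S
  rw [hSh.eq] at hPSD
  rw [h2, Matrix.trace]
  rw [Complex.re_sum]
  exact Finset.sum_nonneg fun i _ => aux_diag_re_nonneg hPSD i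

theorem stmt_15 (D : ℕ) (hD : 0 < D) (p d : ℝ) (hp : p ∈ Set.Ioo (0:ℝ) 1) (hd : 0 < d)
    (ρ σ M : Matrix (Fin D) (Fin D) ℂ)
    (hρ : ρ.PosSemidef) (hσ : σ.PosSemidef)
    (hρtr : ρ.trace = 1) (hσtr : σ.trace = 1)
    (hH : (ρ - σ).IsHermitian)
    (htd : (1/2) * ∑ i, |hH.eigenvalues i| ≤ d)
    (hM : M.PosSemidef) (hMI : ((1 : Matrix (Fin D) (Fin D) ℂ) - M).PosSemidef) :
    (M * ((p / D : ℂ) • (1 : Matrix (Fin D) (Fin D) ℂ) + ((1 - p : ℝ) : ℂ) • ρ)).trace.re ≤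
      (1 + ((1 - p) / p) * d * D) *
        (M * ((p / D : ℂ) • (1 : Matrix (Fin D) (Fin D) ℂ) + ((1 - p : ℝ) : ℂ) • σ)).trace.re := by
  obtain ⟨hp0, hp1⟩ := hp
  -- sum of eigenvalues is zero
  have htrA : (ρ - σ).trace = 0 := by
    rw [Matrix.trace_sub, hρtr, hσtr, sub_self]
  set U := (hH.eigenvectorUnitary : Matrix (Fin D) (Fin D) ℂ) with hU
  have hUU : U * star U = 1 := (Matrix.mem_unitaryGroup_iff).mp hH.eigenvectorUnitary.2
  have hspec := hH.spectral_theorem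
  rw [Unitary.conjStarAlgAut_apply, ← hU] at hspec
  have hsum : ∑ i, hH.eigenvalues i = 0 := by
    have h0 : (ρ - σ).trace = (Matrix.diagonal (RCLike.ofReal ∘ hH.eigenvalues) : Matrix (Fin D) (Fin D) ℂ).trace := by
      conv_lhs => rw [hspec]
      rw [Matrix.trace_mul_comm, ← mul_assoc]
      rw [show star U * U = 1 from (Matrix.mem_unitaryGroup_iff').mp hH.eigenvectorUnitary.2]
      rw [one_mul]
    rw [htrA] at h0
    have h2 : (0:ℂ) = ∑ i, (hH.eigenvalues i : ℂ) := by
      simpa [Matrix.trace, Matrix.diag, Matrix.diagonal] using h0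
    have := congrArg Complex.re h2
    simpa [Complex.re_sum] using this.symm
  -- each eigenvalue is at most d
  have heig_le : ∀ i, hH.eigenvalues i ≤ d := by
    intro i
    have h1 : hH.eigenvalues i ≤ (hH.eigenvalues i + |hH.eigenvalues i|) / 2 := by
      have := le_abs_self (hH.eigenvalues i); linarith
    have h2 : (hH.eigenvalues i + |hH.eigenvalues i|) / 2 ≤
        ∑ j, (hH.eigenvalues j + |hH.eigenvalues j|) / 2 := by
      apply Finset.single_le_sum (f := fun j => (hH.eigenvalues j + |hH.eigenvalues j|) / 2)
      · intro j _
        have := neg_abs_le (hH.eigenvalues j); linarith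
      · exact Finset.mem_univ i
    have h3 : ∑ j, (hH.eigenvalues j + |hH.eigenvalues j|) / 2
        = (1/2) * ∑ j, |hH.eigenvalues j| := by
      rw [← Finset.sum_div, Finset.sum_add_distrib, hsum, zero_add]
      ring
    linarith
  -- d • 1 - A is PSD
  have hdA : ((d:ℂ) • (1 : Matrix (Fin D) (Fin D) ℂ) - (ρ - σ)).PosSemidef := by
    have hone : (d:ℂ) • (1 : Matrix (Fin D) (Fin D) ℂ)
        = U * Matrix.diagonal (fun _ => (d:ℂ)) * star U := by
      conv_rhs => rw [← Matrix.smul_one_eq_diagonal]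
      rw [Matrix.mul_smul, mul_one, Matrix.smul_mul, hUU]
    have hdiff : (d:ℂ) • (1 : Matrix (Fin D) (Fin D) ℂ) - (ρ - σ)
        = U * Matrix.diagonal (fun i => ((d - hH.eigenvalues i : ℝ) : ℂ)) * star U := by
      rw [hone]
      conv_lhs => rw [hspec]
      rw [← Matrix.sub_mul, ← Matrix.mul_sub, Matrix.diagonal_sub]
      congr 1
      ext i j
      simp [Matrix.diagonal]
    rw [hdiff]
    have hdiag : (Matrix.diagonal (fun i => ((d - hH.eigenvalues i : ℝ) : ℂ))).PosSemidef := by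
      apply Matrix.PosSemidef.diagonal
      intro i
      show (0:ℂ) ≤ _
      rw [Complex.zero_le_real]
      have := heig_le i; linarith
    have := hdiag.mul_mul_conjTranspose_same U
    rwa [← Matrix.star_eq_conjTranspose] at this
  -- key real quantities
  have key1 : (M * (ρ - σ)).trace.re ≤ d * M.trace.re := by
    have h0 : 0 ≤ (M * ((d:ℂ) • (1 : Matrix (Fin D) (Fin D) ℂ) - (ρ - σ))).trace.re :=
      aux_trace_mul_re_nonneg hM hdA
    have hexp : (M * ((d:ℂ) • (1 : Matrix (Fin D) (Fin D) ℂ) - (ρ - σ))).trace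
        = (d:ℂ) * M.trace - (M * (ρ - σ)).trace := by
      rw [Matrix.mul_sub, Matrix.trace_sub, Matrix.mul_smul, Matrix.trace_smul, mul_one,
        smul_eq_mul]
    rw [hexp] at h0
    have : ((d:ℂ) * M.trace - (M * (ρ - σ)).trace).re
        = d * M.trace.re - (M * (ρ - σ)).trace.re := by
      simp [Complex.sub_re, Complex.mul_re]
    rw [this] at h0
    linarith
  have key2 : 0 ≤ (M * σ).trace.re := aux_trace_mul_re_nonneg hM hσ
  have key3 : 0 ≤ M.trace.re := by
    have := aux_trace_mul_re_nonneg hM (Matrix.PosSemidef.one (n := Fin D) (R := ℂ))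
    simpa using this
  have keyA : (M * ρ).trace.re ≤ (M * σ).trace.re + d * M.trace.re := by
    have : (M * (ρ - σ)).trace = (M * ρ).trace - (M * σ).trace := by
      rw [Matrix.mul_sub, Matrix.trace_sub]
    rw [this, Complex.sub_re] at key1
    linarith
  -- expand both sides
  have hexpand : ∀ X : Matrix (Fin D) (Fin D) ℂ,
      (M * ((p / D : ℂ) • (1 : Matrix (Fin D) (Fin D) ℂ) + ((1 - p : ℝ) : ℂ) • X)).trace.re
      = (p / D) * M.trace.re + (1 - p) * (M * X).trace.re := by
    intro X
    rw [Matrix.mul_add, Matrix.trace_add, Matrix.mul_smul, Matrix.mul_smul,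
      Matrix.trace_smul, Matrix.trace_smul, mul_one, Complex.add_re, smul_eq_mul, smul_eq_mul]
    have h1 : ((p / D : ℂ) * M.trace).re = (p / D) * M.trace.re := by
      have : (p / D : ℂ) = ((p / D : ℝ) : ℂ) := by push_cast; ring
      rw [this, Complex.re_ofReal_mul]
    have h2 : (((1 - p : ℝ) : ℂ) * (M * X).trace).re = (1 - p) * (M * X).trace.re :=
      Complex.re_ofReal_mul _ _
    rw [h1, h2]
  rw [hexpand ρ, hexpand σ]
  have hDpos : (0:ℝ) < D := by exact_mod_cast hD
  -- final arithmetic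
  have hc : ((1 - p) / p) * d * D * (p / D) = (1 - p) * d := by
    field_simp
  nlinarith [mul_nonneg (mul_nonneg (mul_nonneg (div_nonneg (by linarith : (0:ℝ) ≤ 1 - p) hp0.le) hd.le) hDpos.le) key2,
    mul_le_mul_of_nonneg_left keyA (by linarith : (0:ℝ) ≤ 1 - p)]
end

section
/- Let p ∈ (0, 0.05], p' = 1 - (1-p)^7 - 7p(1-p)^6, and p₅' = 1 - (1-p')^7 - 7p'(1-p')^6. Then for any d > 0, D > 0: ln(1 + ((1-p₅')/p₅')dD) > ln(1 + ((1-p')/p')dD) > ln(1 + ((1-p)/p)dD); i.e., each additional level of Steane concatenation strictly increases the privacy budget. -/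
lemma steane_key (q : ℝ) (h0 : 0 < q) (h05 : q ≤ 0.05) :
    0 < 1 - (1 - q)^7 - 7 * q * (1 - q)^6 ∧ 1 - (1 - q)^7 - 7 * q * (1 - q)^6 < q := by
  constructor
  · have hg : 0 < 21 - 70*q + 105*q^2 - 84*q^3 + 35*q^4 - 6*q^5 := by
      nlinarith [pow_pos h0 2, pow_pos h0 3, pow_pos h0 4, pow_pos h0 5]
    nlinarith [mul_pos (pow_pos h0 2) hg]
  · nlinarith [sq_nonneg q, pow_pos h0 2, pow_pos h0 3, pow_pos h0 4,
      mul_pos (mul_pos h0 h0) h0, sq_nonneg (q*q), sq_nonneg (q*q*q)]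

lemma log_step (q q' d D : ℝ) (h0' : 0 < q') (hlt : q' < q) (hq1 : q < 1)
    (hd : 0 < d) (hD : 0 < D) :
    Real.log (1 + ((1 - q') / q') * d * D) > Real.log (1 + ((1 - q) / q) * d * D) := by
  have h0 : 0 < q := lt_trans h0' hlt
  have h1 : (1 - q) / q ≥ 0 := div_nonneg (by linarith) h0.le
  have h2 : (1 - q) / q < (1 - q') / q' := by
    rw [div_lt_div_iff₀ h0 h0']
    nlinarith
  apply Real.log_lt_log
  · positivity
  · have := mul_pos hd hD
    nlinarith

theorem stmt_18 (p p' p₅' d D : ℝ) (hp : 0 < p) (hp05 : p ≤ 0.05)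
    (hp' : p' = 1 - (1 - p)^7 - 7 * p * (1 - p)^6)
    (hp₅' : p₅' = 1 - (1 - p')^7 - 7 * p' * (1 - p')^6)
    (hd : 0 < d) (hD : 0 < D) :
    Real.log (1 + ((1 - p₅') / p₅') * d * D) > Real.log (1 + ((1 - p') / p') * d * D) ∧
    Real.log (1 + ((1 - p') / p') * d * D) > Real.log (1 + ((1 - p) / p) * d * D) := by
  obtain ⟨h1, h2⟩ := steane_key p hp hp05
  rw [← hp'] at h1 h2
  obtain ⟨h3, h4⟩ := steane_key p' h1 (by linarith)
  rw [← hp₅'] at h3 h4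
  exact ⟨log_step p' p₅' d D h3 h4 (by linarith) hd hD,
         log_step p p' d D h1 h2 (by linarith) hd hD⟩
end
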